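/- arXiv:1202.6033 — 2 statements merged into one kernel-verified Lean document; each statement's English description precedes it below -/
import Mathlib

section
/- Let X_1, ..., X_n be independent Bernoulli random variables where X_i has success probability p_i ∈ [0,1]. Let T be the random variable equal to the smallest index i such that X_i = 1 (and T = n if all X_i = 0). Then the expectation of the sum p_1 + p_2 + ... + p_T is at most 1. -/
open MeasureTheory ProbabilityTheory

/-- The standard identity `∑_{i<n} q i ∏_{j<i} (1-q j) = 1 - ∏_{j<n} (1-q j)`. -/
lemma aux_sum_prod (q : ℕ → ℝ) (n : ℕ) :
    ∑ i ∈ Finset.range n, q i * ∏ j ∈ Finset.range i, (1 - q j)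
      = 1 - ∏ j ∈ Finset.range n, (1 - q j) := by
  induction n with
  | zero => simp
  | succ m ih =>
      rw [Finset.sum_range_succ, Finset.prod_range_succ, ih]
      ring

/-- For independent Bernoulli random variables `X i` with success
probabilities `p i`, and `T` the first index with `X i = true` (or the last index `n-1`,
i.e. "T = n" in 1-indexed terms, if all fail), the expectation of `∑_{i ≤ T} p i` is at most 1. -/
theorem stmt_0 {Ω : Type*} [MeasurableSpace Ω] (μ : Measure Ω) [IsProbabilityMeasure μ]
    (n : ℕ) (hn : 0 < n) (X : Fin n → Ω → Bool) (p : Fin n → ℝ)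
    (hmeas : ∀ i, Measurable (X i))
    (hindep : iIndepFun X μ)
    (hp : ∀ i, (μ {ω | X i ω = true}).toReal = p i)
    (hp01 : ∀ i, 0 ≤ p i ∧ p i ≤ 1)
    (T : Ω → ℕ)
    (hT : ∀ ω, T ω = sInf ({i : ℕ | ∃ h : i < n, X ⟨i, h⟩ ω = true} ∪ {n - 1})) :
    ∫ ω, (∑ i : Fin n, if (i : ℕ) ≤ T ω then p i else 0) ∂μ ≤ 1 := by
  -- the event that all variables before `i` are false
  set A : Fin n → Set Ω := fun i => ⋂ j ∈ Finset.Iio i, (X j) ⁻¹' {false} with hA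
  have hAmeas : ∀ i, MeasurableSet (A i) := fun i =>
    Finset.measurableSet_biInter _ fun j _ => (hmeas j) (by simp)
  -- the condition `i ≤ T ω` is exactly membership in `A i`
  have hcond : ∀ (i : Fin n) (ω : Ω), ((i : ℕ) ≤ T ω ↔ ω ∈ A i) := by
    intro i ω
    rw [hT]
    have hne : ({k : ℕ | ∃ h : k < n, X ⟨k, h⟩ ω = true} ∪ {n - 1}).Nonempty :=
      ⟨n - 1, Or.inr rfl⟩
    rw [le_csInf_iff (OrderBot.bddBelow _) hne]
    constructor
    · intro h
      simp only [hA, Set.mem_iInter, Set.mem_preimage, Set.mem_singleton_iff]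
      intro j hj
      simp only [Finset.mem_Iio] at hj
      by_contra hfalse
      have htrue : X j ω = true := by
        cases hXj : X j ω with
        | false => exact absurd hXj hfalse
        | true => rfl
      have : (i : ℕ) ≤ (j : ℕ) := h (j : ℕ) (Or.inl ⟨j.isLt, by simpa using htrue⟩)
      exact absurd (lt_of_le_of_lt this hj) (lt_irrefl _)
    · intro h k hk
      rcases hk with ⟨hkn, hXk⟩ | hk
      · by_contra hik
        push_neg at hik
        have hmem : (⟨k, hkn⟩ : Fin n) ∈ Finset.Iio i := by
          simp [Fin.lt_def, hik]
        have := Set.mem_iInter₂.mp h _ hmem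
        simp only [Set.mem_preimage, Set.mem_singleton_iff] at this
        rw [this] at hXk
        exact Bool.false_ne_true hXk
      · simp only [Set.mem_singleton_iff] at hk
        subst hk
        omega
  -- measure of `A i`
  have hAμ : ∀ i, (μ (A i)).toReal = ∏ j ∈ Finset.Iio i, (1 - p j) := by
    intro i
    have := hindep.meas_biInter (S := Finset.Iio i)
      (s := fun j => (X j) ⁻¹' {false}) (fun j _ => ⟨{false}, by simp, rfl⟩)
    rw [hA]
    rw [this, ENNReal.toReal_prod]
    refine Finset.prod_congr rfl fun j _ => ?_
    have hcompl : (X j) ⁻¹' {false} = ((X j) ⁻¹' {true})ᶜ := by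
      ext ω
      simp only [Set.mem_preimage, Set.mem_singleton_iff, Set.mem_compl_iff]
      exact ⟨fun h hh => by rw [h] at hh; exact Bool.false_ne_true hh,
        fun h => by cases hX : X j ω with
          | false => rfl
          | true => exact absurd hX h⟩
    have hms : MeasurableSet ((X j) ⁻¹' {true}) := (hmeas j) (by simp)
    rw [hcompl, measure_compl hms (measure_ne_top μ _),
      measure_univ, ENNReal.toReal_sub_of_le (prob_le_one) (by simp)]
    simp only [ENNReal.toReal_one]
    congr 1
    rw [← hp j]
    rfl
  -- rewrite integrand using indicators
  have hrw : ∀ ω, (∑ i : Fin n, if (i : ℕ) ≤ T ω then p i else 0)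
      = ∑ i : Fin n, (A i).indicator (fun _ => p i) ω := by
    intro ω
    refine Finset.sum_congr rfl fun i _ => ?_
    by_cases h : (i : ℕ) ≤ T ω
    · rw [if_pos h, Set.indicator_of_mem ((hcond i ω).mp h)]
    · rw [if_neg h, Set.indicator_of_notMem (fun hm => h ((hcond i ω).mpr hm))]
  rw [integral_congr_ae (Filter.Eventually.of_forall hrw)]
  have hint : ∀ i : Fin n, Integrable ((A i).indicator (fun _ => p i)) μ := by
    intro i
    exact (integrable_const (p i)).indicator (hAmeas i)
  rw [integral_finset_sum _ fun i _ => hint i]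
  have hval : ∀ i : Fin n, ∫ ω, (A i).indicator (fun _ => p i) ω ∂μ
      = (∏ j ∈ Finset.Iio i, (1 - p j)) * p i := by
    intro i
    rw [integral_indicator_const _ (hAmeas i), measureReal_def, hAμ i, smul_eq_mul]
  rw [Finset.sum_congr rfl fun i _ => hval i]
  -- now pure algebra: convert to a sum over `range n`
  set q : ℕ → ℝ := fun k => if h : k < n then p ⟨k, h⟩ else 0 with hq
  have hprodeq : ∀ i : Fin n, ∏ j ∈ Finset.Iio i, (1 - p j)
      = ∏ j ∈ Finset.range (i : ℕ), (1 - q j) := by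
    intro i
    refine Finset.prod_bij' (fun j _ => (j : ℕ)) (fun k hk => ⟨k, ?_⟩) ?_ ?_ ?_ ?_ ?_
    · exact lt_trans (Finset.mem_range.mp hk) i.isLt
    · intro j hj; simpa using Finset.mem_Iio.mp hj
    · intro k hk
      simp only [Finset.mem_Iio, Fin.lt_def]
      exact Finset.mem_range.mp hk
    · intro j hj; simp
    · intro k hk; simp
    · intro j hj
      have hjn : (j : ℕ) < n := j.isLt
      simp [hq, hjn]
  have hsumeq : ∑ i : Fin n, (∏ j ∈ Finset.Iio i, (1 - p j)) * p i
      = ∑ k ∈ Finset.range n, q k * ∏ j ∈ Finset.range k, (1 - q j) := by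
    rw [Finset.sum_range fun k => q k * ∏ j ∈ Finset.range k, (1 - q j)]
    refine Finset.sum_congr rfl fun i _ => ?_
    rw [hprodeq i, mul_comm]
    congr 1
    simp [hq, i.isLt]
  rw [hsumeq, aux_sum_prod]
  have hprod_nonneg : 0 ≤ ∏ j ∈ Finset.range n, (1 - q j) := by
    refine Finset.prod_nonneg fun j hj => ?_
    by_cases h : j < n
    · simp only [hq, dif_pos h]
      linarith [(hp01 ⟨j, h⟩).2]
    · simp [hq, h]
  linarith
end

section
/- Let W_i for i ∈ [n] be defined by the Bollobás–Riordan construction: sample mn pairs (x_{i,j}, y_{i,j}) uniformly from the triangle {(x,y) : 0 ≤ x < y ≤ 1}, sort so the y_{i,j} are increasing, and set W_i = y_{i,m}. Then with probability 1 - o(1), |W_i - √(i/n)| ≤ (1/100)·√(i/n) simultaneously for all i with 160·log(n)·(log log n)² ≤ i ≤ n. -/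
open MeasureTheory ProbabilityTheory Classical

section AuxStmt11
open Real List


lemma aux_countP_ofFn {α : Type*} (p : α → Bool) : ∀ (N : ℕ) (f : Fin N → α),
    (List.ofFn f).countP p = ∑ j : Fin N, (if p (f j) then 1 else 0)
  | 0, f => by simp
  | (N+1), f => by
    rw [List.ofFn_succ, List.countP_cons, aux_countP_ofFn p N, Fin.sum_univ_succ]
    by_cases h : p (f 0) <;> simp [h, add_comm]

lemma aux_sorted_getD {l : List ℝ} (hl : l.Pairwise (· ≤ ·)) (t : ℝ) :
    ∀ k : ℕ, k < l.length →
    (l.getD k 0 ≤ t ↔ k + 1 ≤ l.countP (fun x => decide (x ≤ t))) := by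
  induction l with
  | nil => intro k hk; simp at hk
  | cons a l ih =>
    rw [List.pairwise_cons] at hl
    intro k hk
    have hzero : ¬ a ≤ t → l.countP (fun x => decide (x ≤ t)) = 0 := by
      intro hat
      rw [List.countP_eq_zero]
      intro b hb
      simp only [decide_eq_true_eq]
      exact fun hbt => hat (le_trans (hl.1 b hb) hbt)
    cases k with
    | zero =>
      simp only [List.getD_cons_zero, List.countP_cons, decide_eq_true_eq]
      by_cases hat : a ≤ t
      · simp [hat]
      · simp only [hat, if_false, hzero hat]
        simpa using hat
    | succ k =>
      simp only [List.getD_cons_succ, List.countP_cons, List.length_cons,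
        decide_eq_true_eq] at *
      have hk' : k < l.length := by omega
      have hiff := ih hl.2 k hk'
      by_cases hat : a ≤ t
      · simp only [hat, if_true]
        rw [hiff]
        omega
      · simp only [hat, if_false, hzero hat, add_zero]
        constructor
        · intro h
          exfalso
          apply hat
          refine le_trans (hl.1 _ ?_) h
          rw [List.getD_eq_getElem l 0 hk']
          exact List.getElem_mem _
        · omega


lemma aux_exp_quad {x : ℝ} (hx : |x| ≤ 1) : exp x ≤ 1 + x + (3/4) * x^2 := by
  have h := Real.exp_bound hx (n := 2) (by norm_num)
  rw [abs_le] at h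
  have h2 : |x|^2 = x^2 := sq_abs x
  simp only [Finset.sum_range_succ, Finset.sum_range_zero, Nat.factorial] at h
  norm_num at h
  nlinarith [h.2]

lemma aux_e1 : exp (1/50) ≤ 10203/10000 := by
  have := aux_exp_quad (x := 1/50) (by rw [abs_of_nonneg] <;> norm_num)
  nlinarith

lemma aux_e2 : exp (-(1/50)) ≤ 9803/10000 := by
  have := aux_exp_quad (x := -(1/50)) (by rw [abs_of_nonpos] <;> norm_num)
  nlinarith

lemma aux_e3 : exp (-(1/20000)) ≤ 1 - 1/20001 := by
  have := aux_exp_quad (x := -(1/20000)) (by rw [abs_of_nonpos] <;> norm_num)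
  nlinarith

lemma aux_up_exponent (m n i : ℕ) (hm : 2 ≤ m) (hi1 : 1 ≤ i) (hin : i ≤ n) :
    -(1/50) * ((m*i : ℕ) : ℝ) + ((m*n : ℕ) : ℝ) * ((99/100)^2 * ((i:ℝ)/n)) * (exp (1/50) - 1)
      ≤ -(1/10000) * i := by
  have hn : 0 < n := le_trans hi1 hin
  have hn' : (0:ℝ) < n := by exact_mod_cast hn
  have hkey : ((m*n : ℕ) : ℝ) * ((99/100)^2 * ((i:ℝ)/n)) = (99/100)^2 * (m*i : ℕ) := by
    push_cast; field_simp
  rw [hkey]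
  have hmi : (2 : ℝ) * i ≤ ((m*i : ℕ) : ℝ) := by
    push_cast
    have h2 : (2:ℝ) ≤ m := by exact_mod_cast hm
    have h1 : (1:ℝ) ≤ i := by exact_mod_cast hi1
    nlinarith
  have hi' : (1:ℝ) ≤ i := by exact_mod_cast hi1
  nlinarith [aux_e1, Real.add_one_le_exp (1/50 : ℝ)]

lemma aux_lo_exponent (m n i : ℕ) (hm : 2 ≤ m) (hi1 : 1 ≤ i) (hin : i ≤ n) :
    -(-(1/50)) * (((m*i : ℕ) : ℝ) - 1)
      + ((m*n : ℕ) : ℝ) * ((101/100)^2 * ((i:ℝ)/n)) * (exp (-(1/50)) - 1)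
      ≤ -(1/10000) * i := by
  have hn : 0 < n := le_trans hi1 hin
  have hn' : (0:ℝ) < n := by exact_mod_cast hn
  have hkey : ((m*n : ℕ) : ℝ) * ((101/100)^2 * ((i:ℝ)/n)) = (101/100)^2 * (m*i : ℕ) := by
    push_cast; field_simp
  rw [hkey]
  have hmi : (2 : ℝ) * i ≤ ((m*i : ℕ) : ℝ) := by
    push_cast
    have h2 : (2:ℝ) ≤ m := by exact_mod_cast hm
    have h1 : (1:ℝ) ≤ i := by exact_mod_cast hi1
    nlinarith
  have hi' : (1:ℝ) ≤ i := by exact_mod_cast hi1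
  nlinarith [aux_e2, Real.add_one_le_exp (-(1/50) : ℝ), exp_pos (-(1/50) : ℝ)]

lemma aux_geom (n : ℕ) : ∑ i ∈ Finset.Icc 1 n, exp (-(1/20000)) ^ i ≤ 20001 := by
  set r := exp (-(1/20000)) with hr
  have hr0 : 0 < r := exp_pos _
  have hr1 : r ≤ 1 - 1/20001 := aux_e3
  have hsub : ∑ i ∈ Finset.Icc 1 n, r ^ i ≤ ∑ i ∈ Finset.range (n+1), r ^ i := by
    apply Finset.sum_le_sum_of_subset_of_nonneg
    · intro x hx
      simp only [Finset.mem_Icc] at hx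
      simp only [Finset.mem_range]
      omega
    · intro i _ _; positivity
  refine le_trans hsub ?_
  have hgeom : (∑ i ∈ Finset.range (n+1), r ^ i) * (1 - r) = 1 - r ^ (n+1) := by
    have := geom_sum_mul r (n+1)
    nlinarith [this]
  have hpow : 0 ≤ r ^ (n+1) := by positivity
  nlinarith [Finset.sum_nonneg (fun i (_ : i ∈ Finset.range (n+1)) => pow_nonneg hr0.le i)]

lemma aux_sum_bound (n : ℕ) (L ε : ℝ) (hL : 40002 * exp (-(L/20000)) ≤ ε) :
    ∑ i ∈ (Finset.Icc 1 n).filter (fun i : ℕ => L ≤ (i:ℝ)), 2 * exp (-(1/10000) * i) ≤ ε := by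
  have hstep : ∀ i ∈ (Finset.Icc 1 n).filter (fun i : ℕ => L ≤ (i:ℝ)),
      2 * exp (-(1/10000) * i) ≤ 2 * exp (-(L/20000)) * exp (-(1/20000)) ^ i := by
    intro i hi
    simp only [Finset.mem_filter] at hi
    have hiL : L ≤ (i:ℝ) := hi.2
    have : exp (-(1/10000) * i) = exp (-(1/20000) * i) * exp (-(1/20000) * i) := by
      rw [← Real.exp_add]; ring_nf
    rw [this]
    have h1 : exp (-(1/20000) * (i:ℝ)) ≤ exp (-(L/20000)) := by
      apply exp_le_exp.2; linarith
    have h2 : exp (-(1/20000) * (i:ℝ)) = exp (-(1/20000)) ^ i := by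
      rw [← Real.exp_nat_mul]; ring_nf
    rw [← h2]
    nlinarith [exp_pos (-(1/20000) * (i:ℝ)), exp_pos (-(L/20000))]
  calc ∑ i ∈ (Finset.Icc 1 n).filter (fun i : ℕ => L ≤ (i:ℝ)), 2 * exp (-(1/10000) * i)
      ≤ ∑ i ∈ (Finset.Icc 1 n).filter (fun i : ℕ => L ≤ (i:ℝ)),
          2 * exp (-(L/20000)) * exp (-(1/20000)) ^ i := Finset.sum_le_sum hstep
    _ ≤ ∑ i ∈ Finset.Icc 1 n, 2 * exp (-(L/20000)) * exp (-(1/20000)) ^ i := by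
        apply Finset.sum_le_sum_of_subset_of_nonneg (Finset.filter_subset _ _)
        intro i _ _; positivity
    _ = 2 * exp (-(L/20000)) * ∑ i ∈ Finset.Icc 1 n, exp (-(1/20000)) ^ i := by
        rw [Finset.mul_sum]
    _ ≤ 2 * exp (-(L/20000)) * 20001 := by
        have := aux_geom n
        nlinarith [exp_pos (-(L/20000))]
    _ ≤ ε := by nlinarith [exp_pos (-(L/20000))]

lemma aux_bridge (m n i : ℕ) (hm : 2 ≤ m) (hi1 : 1 ≤ i) (hin : i ≤ n)
    (f : Fin (m*n) → ℝ) (t : ℝ) :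
    ((List.ofFn f).mergeSort (fun a b => decide (a ≤ b))).getD (m*i-1) 0 ≤ t
      ↔ m*i ≤ (List.ofFn f).countP (fun x => decide (x ≤ t)) := by
  set l := List.ofFn f with hl
  set ls := l.mergeSort (fun a b => decide (a ≤ b)) with hls
  have hsort : ls.Pairwise (· ≤ ·) := List.pairwise_mergeSort' (· ≤ ·) l
  have hperm : ls.Perm l := List.mergeSort_perm l _
  have hlen : ls.length = m*n := by rw [hperm.length_eq, hl, List.length_ofFn]
  have h1 : m*i ≤ m*n := Nat.mul_le_mul_left m hin
  have h2 : 1 ≤ m*i := Nat.mul_pos (by omega) hi1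
  have hk : m*i - 1 < ls.length := by omega
  rw [aux_sorted_getD hsort t _ hk, hperm.countP_eq]
  have : m*i - 1 + 1 = m*i := by omega
  rw [this]

lemma aux_count_real (N : ℕ) (f : Fin N → ℝ) (t : ℝ) :
    ((List.ofFn f).countP (fun x => decide (x ≤ t)) : ℝ)
      = ∑ j, if f j ≤ t then (1:ℝ) else 0 := by
  rw [aux_countP_ofFn]
  push_cast
  congr 1
  funext j
  by_cases h : f j ≤ t <;> simp [h]


variable {Ω : Type} [MeasurableSpace Ω] {μ : Measure Ω} [IsProbabilityMeasure μ]

lemma aux_exp_ind (X : Ω → ℝ) (t s : ℝ) (ω : Ω) :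
    exp (s * (if X ω ≤ t then (1:ℝ) else 0)) =
      ({ω | X ω ≤ t}).indicator (fun _ => exp s - 1) ω + 1 := by
  by_cases h : X ω ≤ t <;>
    simp [h, Set.indicator_apply, Set.mem_setOf_eq]

omit [IsProbabilityMeasure μ] in
lemma aux_integrable_exp_ind (X : Ω → ℝ) (hX : Measurable X) (t s : ℝ)
    [IsFiniteMeasure μ] :
    Integrable (fun ω => exp (s * (if X ω ≤ t then (1:ℝ) else 0))) μ := by
  have hA : MeasurableSet {ω | X ω ≤ t} := hX measurableSet_Iic
  have : (fun ω => exp (s * (if X ω ≤ t then (1:ℝ) else 0)))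
      = fun ω => ({ω | X ω ≤ t}).indicator (fun _ => exp s - 1) ω + 1 := by
    funext ω; exact aux_exp_ind X t s ω
  rw [this]
  exact ((integrable_const _).indicator hA).add (integrable_const 1)

lemma aux_mgf_ind (X : Ω → ℝ) (hX : Measurable X) (t s : ℝ) :
    mgf (fun ω => if X ω ≤ t then (1:ℝ) else 0) μ s
      = 1 + (μ {ω | X ω ≤ t}).toReal * (exp s - 1) := by
  have hA : MeasurableSet {ω | X ω ≤ t} := hX measurableSet_Iic
  unfold mgf
  calc ∫ ω, exp (s * (if X ω ≤ t then (1:ℝ) else 0)) ∂μ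
      = ∫ ω, (({ω | X ω ≤ t}).indicator (fun _ => exp s - 1) ω + 1) ∂μ := by
        congr 1; funext ω; exact aux_exp_ind X t s ω
    _ = (μ {ω | X ω ≤ t}).toReal • (exp s - 1) + 1 := by
        rw [integral_add (((integrable_const _).indicator hA)) (integrable_const 1),
          integral_indicator_const _ hA, integral_const]
        simp [Measure.real]
    _ = 1 + (μ {ω | X ω ≤ t}).toReal * (exp s - 1) := by
        rw [smul_eq_mul]; ring

/-- Chernoff bound for a sum of indicators `1{z j ≤ t}`. -/
lemma aux_chernoff {N : ℕ} (z : Fin N → Ω → ℝ) (hz : ∀ j, Measurable (z j))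
    (hind : iIndepFun z μ) (t p : ℝ)
    (hp : ∀ j, (μ {ω | z j ω ≤ t}).toReal = p) (hp0 : 0 ≤ p) (hp1 : p ≤ 1) (s a : ℝ) :
    (0 ≤ s → (μ {ω | a ≤ ∑ j, if z j ω ≤ t then (1:ℝ) else 0}).toReal
        ≤ exp (-s * a + N * p * (exp s - 1))) ∧
    (s ≤ 0 → (μ {ω | (∑ j, if z j ω ≤ t then (1:ℝ) else 0) ≤ a}).toReal
        ≤ exp (-s * a + N * p * (exp s - 1))) := by
  classical
  set Y : Fin N → Ω → ℝ := fun j ω => if z j ω ≤ t then (1:ℝ) else 0 with hY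
  have hYmeas : ∀ j, Measurable (Y j) :=
    fun j => Measurable.ite ((hz j) measurableSet_Iic) measurable_const measurable_const
  have hYind : iIndepFun Y μ := by
    have := hind.comp (fun _ x => if x ≤ t then (1:ℝ) else 0)
      (fun _ => Measurable.ite measurableSet_Iic measurable_const measurable_const)
    exact this
  have hint : ∀ (s' : ℝ) (j : Fin N), j ∈ Finset.univ →
      Integrable (fun ω => exp (s' * Y j ω)) μ :=
    fun s' j _ => aux_integrable_exp_ind (z j) (hz j) t s'
  have hIntSum : ∀ s' : ℝ, Integrable (fun ω => exp (s' * (∑ j, Y j) ω)) μ := fun s' =>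
    ProbabilityTheory.iIndepFun.integrable_exp_mul_sum hYind hYmeas (hint s')
  have hmgf : ∀ s' : ℝ, mgf (∑ j, Y j) μ s' ≤ exp (N * p * (exp s' - 1)) := by
    intro s'
    rw [hYind.mgf_sum hYmeas]
    have heach : ∀ j : Fin N, mgf (Y j) μ s' = 1 + p * (exp s' - 1) := by
      intro j
      rw [hY]
      rw [aux_mgf_ind (z j) (hz j) t s', hp j]
    calc (∏ j : Fin N, mgf (Y j) μ s') = (1 + p * (exp s' - 1)) ^ N := by
          rw [Finset.prod_congr rfl (fun j _ => heach j), Finset.prod_const,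
            Finset.card_univ, Fintype.card_fin]
      _ ≤ (exp (p * (exp s' - 1))) ^ N := by
          apply pow_le_pow_left₀
          · nlinarith [exp_pos s', exp_pos (p * (exp s' - 1))]
          · linarith [Real.add_one_le_exp (p * (exp s' - 1))]
      _ = exp (N * (p * (exp s' - 1))) := (Real.exp_nat_mul _ N).symm
      _ = exp (N * p * (exp s' - 1)) := by ring_nf
  have hset1 : {ω | a ≤ ∑ j, Y j ω} = {ω | a ≤ (∑ j, Y j) ω} := by
    simp [Finset.sum_apply]
  have hset2 : {ω | (∑ j, Y j ω) ≤ a} = {ω | (∑ j, Y j) ω ≤ a} := by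
    simp [Finset.sum_apply]
  constructor
  · intro hs
    calc (μ {ω | a ≤ ∑ j, Y j ω}).toReal
        ≤ exp (-s * a) * mgf (∑ j, Y j) μ s := by
          rw [hset1]; exact measure_ge_le_exp_mul_mgf a hs (hIntSum s)
      _ ≤ exp (-s * a) * exp (N * p * (exp s - 1)) := by
          have := hmgf s
          nlinarith [exp_pos (-s * a), mgf_nonneg (X := ∑ j, Y j) (μ := μ) (t := s)]
      _ = exp (-s * a + N * p * (exp s - 1)) := (Real.exp_add _ _).symm
  · intro hs
    calc (μ {ω | (∑ j, Y j ω) ≤ a}).toReal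
        ≤ exp (-s * a) * mgf (∑ j, Y j) μ s := by
          rw [hset2]; exact measure_le_le_exp_mul_mgf a hs (hIntSum s)
      _ ≤ exp (-s * a) * exp (N * p * (exp s - 1)) := by
          have := hmgf s
          nlinarith [exp_pos (-s * a), mgf_nonneg (X := ∑ j, Y j) (μ := μ) (t := s)]
      _ = exp (-s * a + N * p * (exp s - 1)) := (Real.exp_add _ _).symm

end AuxStmt11

section MainStmt11
open MeasureTheory ProbabilityTheory Real

/-- Bollobás–Riordan concentration.  Let `z j` be `m·n` i.i.d. random
variables with CDF `t ↦ t²` on `[0,1]` (the `y`-coordinates of uniform points in the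
triangle `{x < y}`), and let `W i` be the `(m·i)`-th order statistic.  Then with probability
`1 - o(1)`, `|W i - √(i/n)| ≤ (1/100)√(i/n)` simultaneously for all
`160 log(n) (log log n)² ≤ i ≤ n`. -/
theorem stmt_11 (m : ℕ) (hm : 2 ≤ m) :
    ∀ ε > (0 : ℝ), ∃ N : ℕ, ∀ n : ℕ, N ≤ n →
    ∀ (Ω : Type) (_ : MeasurableSpace Ω) (μ : Measure Ω), IsProbabilityMeasure μ →
    ∀ z : Fin (m * n) → Ω → ℝ,
    (∀ j, Measurable (z j)) →
    iIndepFun z μ →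
    (∀ j, ∀ t : ℝ, 0 ≤ t → t ≤ 1 → (μ {ω | z j ω ≤ t}).toReal = t ^ 2) →
    1 - ε ≤ (μ {ω | ∀ i ∈ Finset.Icc 1 n,
        160 * Real.log n * (Real.log (Real.log n)) ^ 2 ≤ (i : ℝ) →
        |(((List.ofFn fun j => z j ω).mergeSort (fun a b => decide (a ≤ b))).getD
            (m * i - 1) 0) - Real.sqrt ((i : ℝ) / n)|
          ≤ (1 / 100) * Real.sqrt ((i : ℝ) / n)}).toReal := by
  intro ε hε
  refine ⟨max 21 (⌈Real.exp (125 * Real.log (40002/ε))⌉₊ + 1), ?_⟩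
  intro n hn Ω mΩ μ hμ z hz hind hcdf
  have hn21 : 21 ≤ n := le_trans (le_max_left _ _) hn
  have hn0 : (0:ℝ) < n := by exact_mod_cast Nat.lt_of_lt_of_le (by norm_num) hn21
  set L : ℝ := 160 * Real.log n * (Real.log (Real.log n))^2 with hLdef
  set G : Set Ω := {ω | ∀ i ∈ Finset.Icc 1 n,
        L ≤ (i : ℝ) →
        |(((List.ofFn fun j => z j ω).mergeSort (fun a b => decide (a ≤ b))).getD
            (m * i - 1) 0) - Real.sqrt ((i : ℝ) / n)|
          ≤ (1 / 100) * Real.sqrt ((i : ℝ) / n)} with hG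
  set F := (Finset.Icc 1 n).filter (fun i : ℕ => L ≤ (i:ℝ)) with hF
  set E1 : ℕ → Set Ω := fun i =>
    {ω | ((m*i : ℕ) : ℝ) ≤ ∑ j, if z j ω ≤ (99/100) * Real.sqrt ((i:ℝ)/n) then (1:ℝ) else 0}
    with hE1def
  set E2 : ℕ → Set Ω := fun i =>
    {ω | (∑ j, if z j ω ≤ min ((101/100) * Real.sqrt ((i:ℝ)/n)) 1 then (1:ℝ) else 0)
        ≤ ((m*i : ℕ) : ℝ) - 1} with hE2def
  -- bounds on measures of bad events
  have hE1bd : ∀ i ∈ F, μ (E1 i) ≤ ENNReal.ofReal (exp (-(1/10000) * i)) := by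
    intro i hiF
    rw [hF, Finset.mem_filter, Finset.mem_Icc] at hiF
    obtain ⟨⟨hi1, hin⟩, hiL⟩ := hiF
    have hdiv0 : (0:ℝ) ≤ (i:ℝ)/n := by positivity
    have hdiv1 : (i:ℝ)/n ≤ 1 := by
      rw [div_le_one hn0]; exact_mod_cast hin
    have hsq : Real.sqrt ((i:ℝ)/n) ^ 2 = (i:ℝ)/n := Real.sq_sqrt hdiv0
    have hsqle : Real.sqrt ((i:ℝ)/n) ≤ 1 := by rw [show (1:ℝ) = Real.sqrt 1 by simp]; exact Real.sqrt_le_sqrt hdiv1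
    have hsq0 : 0 ≤ Real.sqrt ((i:ℝ)/n) := Real.sqrt_nonneg _
    set t1 : ℝ := (99/100) * Real.sqrt ((i:ℝ)/n) with ht1
    have ht10 : 0 ≤ t1 := by positivity
    have ht11 : t1 ≤ 1 := by nlinarith
    have hp : ∀ j, (μ {ω | z j ω ≤ t1}).toReal = (99/100)^2 * ((i:ℝ)/n) := by
      intro j
      rw [hcdf j t1 ht10 ht11, ht1, mul_pow, hsq]
    have hp0 : (0:ℝ) ≤ (99/100)^2 * ((i:ℝ)/n) := by positivity
    have hp1 : (99/100)^2 * ((i:ℝ)/n) ≤ 1 := by nlinarith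
    have hch := (aux_chernoff z hz hind t1 _ hp hp0 hp1 (1/50) ((m*i : ℕ) : ℝ)).1
      (by norm_num)
    rw [ENNReal.le_ofReal_iff_toReal_le (measure_ne_top μ _) (exp_pos _).le]
    refine le_trans hch (Real.exp_le_exp.2 ?_)
    exact aux_up_exponent m n i hm hi1 hin
  have hE2bd : ∀ i ∈ F, μ (E2 i) ≤ ENNReal.ofReal (exp (-(1/10000) * i)) := by
    intro i hiF
    rw [hF, Finset.mem_filter, Finset.mem_Icc] at hiF
    obtain ⟨⟨hi1, hin⟩, hiL⟩ := hiF
    have hdiv0 : (0:ℝ) ≤ (i:ℝ)/n := by positivity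
    have hdiv1 : (i:ℝ)/n ≤ 1 := by
      rw [div_le_one hn0]; exact_mod_cast hin
    have hsq : Real.sqrt ((i:ℝ)/n) ^ 2 = (i:ℝ)/n := Real.sq_sqrt hdiv0
    have hsq0 : 0 ≤ Real.sqrt ((i:ℝ)/n) := Real.sqrt_nonneg _
    set t2 : ℝ := (101/100) * Real.sqrt ((i:ℝ)/n) with ht2
    by_cases h2 : t2 ≤ 1
    · have hmin : min t2 1 = t2 := min_eq_left h2
      have hp : ∀ j, (μ {ω | z j ω ≤ t2}).toReal = (101/100)^2 * ((i:ℝ)/n) := by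
        intro j
        rw [hcdf j t2 (by positivity) h2, ht2, mul_pow, hsq]
      have hp0 : (0:ℝ) ≤ (101/100)^2 * ((i:ℝ)/n) := by positivity
      have ht20 : 0 ≤ t2 := by positivity
      have hp1 : (101/100)^2 * ((i:ℝ)/n) ≤ 1 := by
        have heq : (101/100:ℝ)^2 * ((i:ℝ)/n) = t2^2 := by rw [ht2, mul_pow, hsq]
        rw [heq]; nlinarith
      have hch := (aux_chernoff z hz hind t2 _ hp hp0 hp1 (-(1/50)) (((m*i : ℕ) : ℝ) - 1)).2
        (by norm_num)
      have hE2eq : E2 i = {ω | (∑ j, if z j ω ≤ t2 then (1:ℝ) else 0)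
          ≤ ((m*i : ℕ) : ℝ) - 1} := by
        rw [hE2def]; simp only [← ht2, hmin]
      rw [hE2eq, ENNReal.le_ofReal_iff_toReal_le (measure_ne_top μ _) (exp_pos _).le]
      refine le_trans hch (Real.exp_le_exp.2 ?_)
      exact aux_lo_exponent m n i hm hi1 hin
    · have hmin : min t2 1 = 1 := min_eq_right (le_of_not_ge h2)
      have hsub : E2 i ⊆ ⋃ j, {ω | ¬ z j ω ≤ 1} := by
        intro ω hω
        rw [hE2def, Set.mem_setOf_eq, hmin] at hω
        by_contra hc
        simp only [Set.mem_iUnion, Set.mem_setOf_eq, not_exists, not_not] at hc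
        have hsum : (∑ j, if z j ω ≤ (1:ℝ) then (1:ℝ) else 0) = (m*n : ℕ) := by
          rw [Finset.sum_congr rfl (fun j _ => if_pos (hc j))]
          simp
        rw [hsum] at hω
        have hle : ((m*i : ℕ) : ℝ) ≤ ((m*n : ℕ) : ℝ) := by
          exact_mod_cast Nat.mul_le_mul_left m hin
        linarith
      refine le_trans (measure_mono hsub) ?_
      have hzero : ∀ j : Fin (m*n), μ {ω | ¬ z j ω ≤ (1:ℝ)} = 0 := by
        intro j
        have hms : MeasurableSet {ω | z j ω ≤ (1:ℝ)} := (hz j) measurableSet_Iic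
        have h1 : (μ {ω | z j ω ≤ (1:ℝ)}).toReal = 1 := by
          rw [hcdf j 1 zero_le_one le_rfl]; norm_num
        have h1' : μ {ω | z j ω ≤ (1:ℝ)} = 1 := by
          have hne := measure_ne_top μ {ω | z j ω ≤ (1:ℝ)}
          rw [← ENNReal.ofReal_toReal hne, h1]; simp
        have : {ω | ¬ z j ω ≤ (1:ℝ)} = {ω | z j ω ≤ (1:ℝ)}ᶜ := rfl
        rw [this, measure_compl hms (measure_ne_top μ _), h1', measure_univ, tsub_self]
      calc μ (⋃ j, {ω | ¬ z j ω ≤ (1:ℝ)}) ≤ ∑' j, μ {ω | ¬ z j ω ≤ (1:ℝ)} :=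
            measure_iUnion_le _
        _ = 0 := by simp only [hzero, tsum_zero]
        _ ≤ ENNReal.ofReal (exp (-(1/10000) * i)) := zero_le
  -- bad events cover the complement
  have hsubset : Gᶜ ⊆ ⋃ i ∈ F, (E1 i ∪ E2 i) := by
    intro ω hω
    rw [Set.mem_compl_iff, hG, Set.mem_setOf_eq] at hω
    push_neg at hω
    obtain ⟨i, hiIcc, hiL, habs⟩ := hω
    rw [Finset.mem_Icc] at hiIcc
    obtain ⟨hi1, hin⟩ := hiIcc
    have hiF : i ∈ F := by
      rw [hF, Finset.mem_filter, Finset.mem_Icc]; exact ⟨⟨hi1, hin⟩, hiL⟩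
    set s : ℝ := Real.sqrt ((i:ℝ)/n) with hs
    have hs0 : 0 ≤ s := Real.sqrt_nonneg _
    set W : ℝ := ((List.ofFn fun j => z j ω).mergeSort (fun a b => decide (a ≤ b))).getD
        (m * i - 1) 0 with hW
    have hbr := fun t => aux_bridge m n i hm hi1 hin (fun j => z j ω) t
    have hcnt := fun t => aux_count_real (m*n) (fun j => z j ω) t
    rw [lt_abs] at habs
    refine Set.mem_biUnion hiF ?_
    rcases habs with hA | hB
    · -- W too large : in E2
      right
      have hWt : ¬ (W ≤ min ((101/100) * s) 1) := by
        push_neg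
        calc min ((101/100) * s) 1 ≤ (101/100) * s := min_le_left _ _
          _ < W := by linarith
      rw [hW, hbr] at hWt
      push_neg at hWt
      rw [hE2def, Set.mem_setOf_eq]
      rw [← hcnt]
      have h1 : 1 ≤ m*i := Nat.mul_pos (by omega) hi1
      have : (List.ofFn fun j => z j ω).countP
          (fun x => decide (x ≤ min ((101/100) * s) 1)) ≤ m*i - 1 := by omega
      calc ((List.ofFn fun j => z j ω).countP
            (fun x => decide (x ≤ min ((101/100) * s) 1)) : ℝ)
          ≤ ((m*i - 1 : ℕ) : ℝ) := by exact_mod_cast this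
        _ = ((m*i : ℕ) : ℝ) - 1 := by
            rw [Nat.cast_sub h1]; norm_num
    · -- W too small : in E1
      left
      have hWt : W ≤ (99/100) * s := by linarith
      rw [hW, hbr] at hWt
      rw [hE1def, Set.mem_setOf_eq, ← hcnt]
      exact_mod_cast hWt
  -- sum the measure bounds
  have hNcond : 40002 * exp (-(L/20000)) ≤ ε := by
    have hlog21 : (3:ℝ) ≤ Real.log n := by
      rw [Real.le_log_iff_exp_le hn0]
      have h3 : Real.exp 3 = Real.exp 1 ^ 3 := by
        rw [← Real.exp_nat_mul]; norm_num
      have hlt := Real.exp_one_lt_d9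
      have h21 : (21:ℝ) ≤ n := by exact_mod_cast hn21
      have hcube : Real.exp 1 ^ 3 < 2.7182818286 ^ 3 :=
        pow_lt_pow_left₀ hlt (Real.exp_pos 1).le (by norm_num)
      nlinarith
    have hloglog : 1 ≤ Real.log (Real.log n) := by
      rw [Real.le_log_iff_exp_le (by linarith)]
      have := Real.exp_one_lt_d9
      linarith [Real.exp_one_lt_d9]
    have hLlb : 160 * Real.log n ≤ L := by
      rw [hLdef]
      have hsq1 : 1 ≤ (Real.log (Real.log n))^2 := by nlinarith
      nlinarith [mul_le_mul_of_nonneg_left hsq1 (by linarith : (0:ℝ) ≤ 160 * Real.log n)]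
    have hNle : Real.exp (125 * Real.log (40002/ε)) ≤ n := by
      have h1 : ⌈Real.exp (125 * Real.log (40002/ε))⌉₊ + 1 ≤ n :=
        le_trans (le_max_right _ _) hn
      calc Real.exp (125 * Real.log (40002/ε))
          ≤ (⌈Real.exp (125 * Real.log (40002/ε))⌉₊ : ℝ) := Nat.le_ceil _
        _ ≤ (n:ℝ) := by exact_mod_cast Nat.le_of_succ_le h1
    have hlogN : 125 * Real.log (40002/ε) ≤ Real.log n :=
      (Real.le_log_iff_exp_le hn0).2 hNle
    have hexp1 : exp (-(L/20000)) ≤ exp (-(Real.log n)/125) := by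
      apply Real.exp_le_exp.2
      linarith
    have hexp2 : exp (-(Real.log n)/125) ≤ ε / 40002 := by
      have h40 : (0:ℝ) < 40002/ε := by positivity
      have : -(Real.log n)/125 ≤ -Real.log (40002/ε) := by linarith
      calc exp (-(Real.log n)/125) ≤ exp (-Real.log (40002/ε)) := Real.exp_le_exp.2 this
        _ = (40002/ε)⁻¹ := by rw [Real.exp_neg, Real.exp_log h40]
        _ = ε / 40002 := by field_simp
    calc 40002 * exp (-(L/20000)) ≤ 40002 * (ε/40002) := by nlinarith
      _ = ε := by field_simp
  have hGc : μ Gᶜ ≤ ENNReal.ofReal ε := by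
    calc μ Gᶜ ≤ μ (⋃ i ∈ F, (E1 i ∪ E2 i)) := measure_mono hsubset
      _ ≤ ∑ i ∈ F, μ (E1 i ∪ E2 i) := measure_biUnion_finset_le F _
      _ ≤ ∑ i ∈ F, (ENNReal.ofReal (exp (-(1/10000) * i))
            + ENNReal.ofReal (exp (-(1/10000) * i))) :=
          Finset.sum_le_sum fun i hi => le_trans (measure_union_le _ _)
            (add_le_add (hE1bd i hi) (hE2bd i hi))
      _ = ∑ i ∈ F, ENNReal.ofReal (2 * exp (-(1/10000) * i)) := by
          refine Finset.sum_congr rfl fun i _ => ?_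
          rw [← ENNReal.ofReal_add (exp_pos _).le (exp_pos _).le]
          congr 1; ring
      _ = ENNReal.ofReal (∑ i ∈ F, 2 * exp (-(1/10000) * i)) := by
          rw [ENNReal.ofReal_sum_of_nonneg (fun i _ => by positivity)]
      _ ≤ ENNReal.ofReal ε := ENNReal.ofReal_le_ofReal (aux_sum_bound n L ε hNcond)
  have h1 : (1:ℝ) ≤ (μ G).toReal + (μ Gᶜ).toReal := by
    have hle : μ Set.univ ≤ μ G + μ Gᶜ := by
      rw [← Set.union_compl_self G]
      exact measure_union_le _ _
    rw [measure_univ] at hle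
    have hne : μ G + μ Gᶜ ≠ ⊤ := by
      simp [ENNReal.add_ne_top, measure_ne_top]
    have := ENNReal.toReal_mono hne hle
    rwa [ENNReal.toReal_one, ENNReal.toReal_add (measure_ne_top μ _) (measure_ne_top μ _)]
      at this
  have h2 : (μ Gᶜ).toReal ≤ ε := ENNReal.toReal_le_of_le_ofReal hε.le hGc
  linarith

end MainStmt11
end
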